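/- Consider a two-node Ising model P(x₁, x₂) ∝ exp(J·x₁x₂ + h·x₁) on {-1,+1}², with |J| ≤ J_max. Then |P(X₁ = x₁ | X₂ = +1) - P(X₁ = x₁ | X₂ = -1)| ≤ tanh(J_max) for every x₁ ∈ {-1,+1}. -/

import Mathlib

open Real

lemma frac_pos (x : ℝ) : exp x / (exp x + exp (-x)) = exp (2*x) / (exp (2*x) + 1) := by
  have h1 : exp (2*x) = exp x * exp x := by rw [two_mul, Real.exp_add]
  have h2 : exp (-x) * exp x = 1 := by rw [← Real.exp_add]; simp
  rw [div_eq_div_iff (by positivity) (by positivity)]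
  linear_combination (-exp (-x)) * h1 + (-exp x) * h2

lemma frac_neg (x : ℝ) : exp (-x) / (exp x + exp (-x)) = 1 / (exp (2*x) + 1) := by
  have h1 : exp (2*x) = exp x * exp x := by rw [two_mul, Real.exp_add]
  have h2 : exp (-x) * exp x = 1 := by rw [← Real.exp_add]; simp
  rw [div_eq_div_iff (by positivity) (by positivity)]
  linear_combination (exp (-x)) * h1 + (exp x) * h2

lemma half_core (u v T : ℝ) (hu : 0 < u) (hv : 0 < v) (hT : 1 ≤ T)
    (h1 : u ≤ T^2 * v) : u/(u+1) - v/(v+1) ≤ (T-1)/(T+1) := by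
  rw [div_sub_div _ _ (by positivity) (by positivity), div_le_div_iff₀ (by positivity) (by positivity)]
  nlinarith [mul_nonneg (sub_nonneg.2 h1) (mul_nonneg (sub_nonneg.2 hT) (sq_nonneg (v+1))),
    mul_nonneg (sub_nonneg.2 h1) (sq_nonneg (T*v-1)),
    mul_nonneg (mul_nonneg (sub_nonneg.2 hT) (sq_nonneg (T*v-1))) (sub_nonneg.2 hu.le),
    mul_nonneg (mul_nonneg (sub_nonneg.2 hT) (sq_nonneg (T*v-1))) hu.le,
    sq_nonneg (T*v-1), mul_pos hu hv, mul_nonneg (sub_nonneg.2 hT) (sq_nonneg (T*v-1))]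

lemma core (u v T : ℝ) (hu : 0 < u) (hv : 0 < v) (hT : 1 ≤ T)
    (h1 : u ≤ T^2 * v) (h2 : v ≤ T^2 * u) :
    |u/(u+1) - v/(v+1)| ≤ (T-1)/(T+1) := by
  rw [abs_sub_le_iff]
  exact ⟨half_core u v T hu hv hT h1, half_core v u T hv hu hT h2⟩

lemma tanh_form (x : ℝ) : Real.tanh x = (exp (2*x) - 1) / (exp (2*x) + 1) := by
  have h1 : exp (2*x) = exp x * exp x := by rw [two_mul, Real.exp_add]
  have h2 : exp (-x) * exp x = 1 := by rw [← Real.exp_add]; simp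
  rw [Real.tanh_eq_sinh_div_cosh, Real.sinh_eq, Real.cosh_eq,
    div_eq_div_iff (by positivity) (by positivity)]
  linear_combination (-exp (-x)) * h1 + (-exp x) * h2

theorem stmt_4 (J h Jmax : ℝ) (hJ : |J| ≤ Jmax) (x₁ : ℝ) (hx₁ : x₁ = 1 ∨ x₁ = -1) :
    |Real.exp (J * x₁ * 1 + h * x₁) / (Real.exp (J * 1 + h) + Real.exp (-J * 1 - h))
      - Real.exp (J * x₁ * (-1) + h * x₁) /
          (Real.exp (J * (-1) + h) + Real.exp (-J * (-1) - h))| ≤ Real.tanh Jmax := by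
  obtain ⟨hJ1, hJ2⟩ := abs_le.1 hJ
  set u := exp (2*(J+h)) with hu
  set v := exp (2*(h-J)) with hvdef
  have hupos : 0 < u := Real.exp_pos _
  have hvpos : 0 < v := Real.exp_pos _
  set T := exp (2*Jmax) with hT
  have hT1 : 1 ≤ T := Real.one_le_exp (by linarith)
  have hc1 : u ≤ T^2 * v := by
    rw [hu, hvdef, hT, ← Real.exp_nat_mul, ← Real.exp_add]
    exact Real.exp_le_exp.2 (by push_cast; linarith)
  have hc2 : v ≤ T^2 * u := by
    rw [hu, hvdef, hT, ← Real.exp_nat_mul, ← Real.exp_add]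
    exact Real.exp_le_exp.2 (by push_cast; linarith)
  have htanh : Real.tanh Jmax = (T-1)/(T+1) := tanh_form Jmax
  rcases hx₁ with rfl | rfl
  · rw [show J*1*1+h*1 = J+h by ring, show -J*1-h = -(J+h) by ring,
      show J*1+h = J+h by ring, show J*1*(-1)+h*1 = h-J by ring,
      show J*(-1)+h = h-J by ring, show -J*(-1)-h = -(h-J) by ring,
      frac_pos, frac_pos, htanh]
    exact core u v T hupos hvpos hT1 hc1 hc2
  · rw [show J*(-1)*1+h*(-1) = -(J+h) by ring, show -J*1-h = -(J+h) by ring,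
      show J*1+h = J+h by ring, show J*(-1)*(-1)+h*(-1) = -(h-J) by ring,
      show J*(-1)+h = h-J by ring, show -J*(-1)-h = -(h-J) by ring,
      frac_neg, frac_neg, htanh]
    have e : (1:ℝ)/(u+1) - 1/(v+1) = v/(v+1) - u/(u+1) := by
      field_simp
      ring
    rw [e, abs_sub_comm]
    exact core u v T hupos hvpos hT1 hc1 hc2
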